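/- The first-order quantum channel scheme is a trace-preserving, positivity-preserving linear map: let H be Hermitian and L_1,…,L_m be d×d complex matrices, Q = Σⱼ LⱼᴴLⱼ, Δt > 0. Then (i) I + i(Δt/2)H is invertible and U = (I − i(Δt/2)H)(I + i(Δt/2)H)^{−1} is unitary; (ii) with M₀ = U(I − (Δt/2)Q) and Mⱼ = √Δt·Lⱼ for 1 ≤ j ≤ m, one has Σ_{j=0}^{m} MⱼᴴMⱼ = I + (Δt²/4)Q² =: S, which is positive definite; (iii) setting M̃ⱼ = Mⱼ·S^{−1/2} (S^{−1/2} the inverse of the positive definite square root of S), one has Σ_{j=0}^{m} M̃ⱼᴴM̃ⱼ = I, and consequently the map ρ ↦ Σ_{j=0}^{m} M̃ⱼ ρ M̃ⱼᴴ preserves the trace and maps positive semidefinite matrices to positive semidefinite matrices. -/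

import Mathlib

open Matrix
open scoped ComplexOrder

/-- The positive semidefinite square root of a matrix (defined to be `0` if the matrix is not
positive semidefinite). -/
noncomputable def matSqrt {d : ℕ} (A : Matrix (Fin d) (Fin d) ℂ) : Matrix (Fin d) (Fin d) ℂ :=
  open scoped Classical in
  if h : A.PosSemidef then h.1.eigenvectorUnitary.1 * diagonal ((↑) ∘ (h.1.eigenvalues · |>.sqrt))
    * (star h.1.eigenvectorUnitary : Matrix (Fin d) (Fin d) ℂ) else 0

lemma smul_posSemidef' {d : ℕ} {A : Matrix (Fin d) (Fin d) ℂ} (hA : A.PosSemidef)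
    {c : ℝ} (hc : 0 ≤ c) : ((c : ℂ) • A).PosSemidef := by
  constructor
  · unfold Matrix.IsHermitian
    rw [conjTranspose_smul, hA.1.eq, Complex.star_def, Complex.conj_ofReal]
  · intro x
    exact (hA.smul (a := (c : ℂ)) (by exact_mod_cast hc)).2 x


set_option maxHeartbeats 1000000 in
/-- The first-order quantum channel scheme is a trace-preserving, positivity-preserving linear
map: (i) `I + i(Δt/2)H` is invertible and the Cayley transform `U` is unitary; (ii) with
`M₀ = U(I − (Δt/2)Q)` and `Mⱼ = √Δt Lⱼ`, `Σⱼ MⱼᴴMⱼ = I + (Δt²/4)Q² = S`, which is positive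
definite; (iii) `M̃ⱼ = Mⱼ S^{−1/2}` satisfy `Σⱼ M̃ⱼᴴM̃ⱼ = I`, and `ρ ↦ Σⱼ M̃ⱼ ρ M̃ⱼᴴ`
preserves trace and positive semidefiniteness. -/
theorem stmt11 {d m : ℕ} (hd : 1 ≤ d)
    (H : Matrix (Fin d) (Fin d) ℂ) (hH : H.IsHermitian)
    (L : Fin m → Matrix (Fin d) (Fin d) ℂ) (Δt : ℝ) (hΔt : 0 < Δt)
    (Q : Matrix (Fin d) (Fin d) ℂ) (hQ : Q = ∑ j, (L j)ᴴ * L j)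
    (U : Matrix (Fin d) (Fin d) ℂ)
    (hU : U = (1 - (Complex.I * ((Δt / 2 : ℝ) : ℂ)) • H) *
        (1 + (Complex.I * ((Δt / 2 : ℝ) : ℂ)) • H)⁻¹)
    (K : Fin (m+1) → Matrix (Fin d) (Fin d) ℂ)
    (hK : K = Fin.cons (U * (1 - ((Δt / 2 : ℝ) : ℂ) • Q))
        (fun j => ((Real.sqrt Δt : ℝ) : ℂ) • L j))
    (S : Matrix (Fin d) (Fin d) ℂ) (hS : S = 1 + ((Δt ^ 2 / 4 : ℝ) : ℂ) • Q ^ 2)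
    (Kt : Fin (m+1) → Matrix (Fin d) (Fin d) ℂ)
    (hKt : Kt = fun j => K j * (matSqrt S)⁻¹) :
    IsUnit (1 + (Complex.I * ((Δt / 2 : ℝ) : ℂ)) • H)
    ∧ U ∈ Matrix.unitaryGroup (Fin d) ℂ
    ∧ (∑ j, (K j)ᴴ * K j = S)
    ∧ S.PosDef
    ∧ (∑ j, (Kt j)ᴴ * Kt j = 1)
    ∧ (∀ ρ : Matrix (Fin d) (Fin d) ℂ,
        Matrix.trace (∑ j, Kt j * ρ * (Kt j)ᴴ) = Matrix.trace ρ)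
    ∧ (∀ ρ : Matrix (Fin d) (Fin d) ℂ, ρ.PosSemidef →
        (∑ j, Kt j * ρ * (Kt j)ᴴ).PosSemidef) := by
  set c : ℂ := Complex.I * ((Δt / 2 : ℝ) : ℂ) with hc
  set A : Matrix (Fin d) (Fin d) ℂ := 1 + c • H with hA
  set B : Matrix (Fin d) (Fin d) ℂ := 1 - c • H with hB
  have hstarc : star c = -c := by
    rw [hc, star_mul']
    simp [Complex.star_def, Complex.conj_I, Complex.conj_ofReal]
  have hcc : c * c = -((((Δt / 2) ^ 2 : ℝ)) : ℂ) := by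
    rw [hc, show Complex.I * ((Δt / 2 : ℝ) : ℂ) * (Complex.I * ((Δt / 2 : ℝ) : ℂ))
      = (Complex.I * Complex.I) * (((Δt / 2 : ℝ) : ℂ) * ((Δt / 2 : ℝ) : ℂ)) from by ring,
      Complex.I_mul_I]
    push_cast
    ring
  have hcH : (c • H)ᴴ = (-c) • H := by
    rw [conjTranspose_smul, hH.eq, hstarc]
  have hAH : Aᴴ = B := by
    rw [hA, hB, conjTranspose_add, conjTranspose_one, hcH, neg_smul, sub_eq_add_neg]
  have hBH : Bᴴ = A := by
    rw [hB, hA, conjTranspose_sub, conjTranspose_one, hcH, neg_smul, sub_neg_eq_add]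
  have hBA : B * A = 1 + ((((Δt / 2) ^ 2 : ℝ)) : ℂ) • (Hᴴ * H) := by
    rw [hB, hA, hH.eq]
    simp only [mul_add, add_mul, sub_mul, mul_sub, mul_one, one_mul, smul_mul_smul_comm]
    rw [hcc]
    module
  have hBApos : (B * A).PosDef := by
    rw [hBA]
    exact Matrix.PosDef.add_posSemidef Matrix.PosDef.one
      (smul_posSemidef' (posSemidef_conjTranspose_mul_self H) (sq_nonneg _))
  have hdetA : A.det ≠ 0 := by
    intro h
    have := hBApos.det_pos
    rw [det_mul, h, mul_zero] at this
    exact lt_irrefl _ this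
  have hdetB : B.det ≠ 0 := by
    intro h
    have := hBApos.det_pos
    rw [det_mul, h, zero_mul] at this
    exact lt_irrefl _ this
  have hUnitA : IsUnit A := (Matrix.isUnit_iff_isUnit_det A).2 hdetA.isUnit
  have hcomm : A * B = B * A := by
    rw [hA, hB]
    simp only [mul_add, add_mul, sub_mul, mul_sub, mul_one, one_mul, smul_mul_smul_comm]
    module
  have hUmem : U ∈ Matrix.unitaryGroup (Fin d) ℂ := by
    rw [Matrix.mem_unitaryGroup_iff']
    have hstarU : star U = B⁻¹ * A := by
      rw [hU, Matrix.star_eq_conjTranspose, conjTranspose_mul, conjTranspose_nonsing_inv,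
        hAH, hBH]
    rw [hstarU, hU]
    calc B⁻¹ * A * (B * A⁻¹) = B⁻¹ * (A * B) * A⁻¹ := by noncomm_ring
      _ = B⁻¹ * (B * A) * A⁻¹ := by rw [hcomm]
      _ = (B⁻¹ * B) * (A * A⁻¹) := by noncomm_ring
      _ = 1 := by rw [nonsing_inv_mul B hdetB.isUnit, mul_nonsing_inv A hdetA.isUnit, one_mul]
  have hUU : Uᴴ * U = 1 := by
    have := Matrix.mem_unitaryGroup_iff'.mp hUmem
    rwa [Matrix.star_eq_conjTranspose] at this
  have hQherm : Qᴴ = Q := by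
    rw [hQ, conjTranspose_sum]
    congr 1
    funext j
    rw [conjTranspose_mul, conjTranspose_conjTranspose]
  have hsum : ∑ j, (K j)ᴴ * K j = S := by
    rw [hK, Fin.sum_univ_succ]
    simp only [Fin.cons_zero, Fin.cons_succ]
    have h0 : (U * (1 - ((Δt / 2 : ℝ) : ℂ) • Q))ᴴ * (U * (1 - ((Δt / 2 : ℝ) : ℂ) • Q))
        = (1 - ((Δt / 2 : ℝ) : ℂ) • Q) * (1 - ((Δt / 2 : ℝ) : ℂ) • Q) := by
      have hherm : (1 - ((Δt / 2 : ℝ) : ℂ) • Q)ᴴ = 1 - ((Δt / 2 : ℝ) : ℂ) • Q := by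
        rw [conjTranspose_sub, conjTranspose_one, conjTranspose_smul, hQherm,
          Complex.star_def, Complex.conj_ofReal]
      rw [conjTranspose_mul, hherm]
      calc (1 - ((Δt / 2 : ℝ) : ℂ) • Q) * Uᴴ * (U * (1 - ((Δt / 2 : ℝ) : ℂ) • Q))
          = (1 - ((Δt / 2 : ℝ) : ℂ) • Q) * (Uᴴ * U) * (1 - ((Δt / 2 : ℝ) : ℂ) • Q) := by
            noncomm_ring
        _ = _ := by rw [hUU, mul_one]
    rw [h0]
    have h1 : ∀ j : Fin m, (((Real.sqrt Δt : ℝ) : ℂ) • L j)ᴴ * (((Real.sqrt Δt : ℝ) : ℂ) • L j)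
        = ((Δt : ℝ) : ℂ) • ((L j)ᴴ * L j) := by
      intro j
      rw [conjTranspose_smul, smul_mul_smul_comm, Complex.star_def, Complex.conj_ofReal,
        ← Complex.ofReal_mul, Real.mul_self_sqrt hΔt.le]
    simp only [h1, ← Finset.smul_sum, ← hQ, hS]
    rw [pow_two Q]
    simp only [mul_sub, sub_mul, mul_one, one_mul, smul_mul_smul_comm]
    match_scalars <;> (push_cast; ring)
  have hQ2 : (Q ^ 2).PosSemidef := by
    rw [pow_two]
    nth_rewrite 1 [← hQherm]
    exact posSemidef_conjTranspose_mul_self Q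
  have hSpos : S.PosDef := by
    rw [hS]
    exact Matrix.PosDef.add_posSemidef Matrix.PosDef.one
      (smul_posSemidef' hQ2 (by positivity))
  have hSpsd : S.PosSemidef := hSpos.posSemidef
  have hmat : matSqrt S = hSpsd.1.eigenvectorUnitary.1
      * diagonal ((↑) ∘ (hSpsd.1.eigenvalues · |>.sqrt))
      * (star hSpsd.1.eigenvectorUnitary : Matrix (Fin d) (Fin d) ℂ) := by
    rw [matSqrt, dif_pos hSpsd]
  set R₀ : Matrix (Fin d) (Fin d) ℂ := hSpsd.1.eigenvectorUnitary.1
      * diagonal ((↑) ∘ (hSpsd.1.eigenvalues · |>.sqrt))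
      * (star hSpsd.1.eigenvectorUnitary : Matrix (Fin d) (Fin d) ℂ) with hR₀def
  have hR₀S : R₀ * R₀ = S := by
    have hVV : (star hSpsd.1.eigenvectorUnitary : Matrix (Fin d) (Fin d) ℂ)
        * hSpsd.1.eigenvectorUnitary.1 = 1 := by simp
    have hD : diagonal (((↑) ∘ (hSpsd.1.eigenvalues · |>.sqrt)) : Fin d → ℂ)
        * diagonal ((↑) ∘ (hSpsd.1.eigenvalues · |>.sqrt))
        = diagonal (RCLike.ofReal ∘ hSpsd.1.eigenvalues) := by
      rw [diagonal_mul_diagonal]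
      congr 1
      funext i
      simp only [Function.comp]
      rw [← Complex.ofReal_mul, Real.mul_self_sqrt (hSpsd.eigenvalues_nonneg i)]
      rfl
    conv_rhs => rw [hSpsd.1.spectral_theorem, Unitary.conjStarAlgAut_apply]
    rw [hR₀def, ← hD]
    calc _ = hSpsd.1.eigenvectorUnitary.1
          * diagonal ((↑) ∘ (hSpsd.1.eigenvalues · |>.sqrt))
          * ((star hSpsd.1.eigenvectorUnitary : Matrix (Fin d) (Fin d) ℂ)
            * hSpsd.1.eigenvectorUnitary.1)
          * diagonal ((↑) ∘ (hSpsd.1.eigenvalues · |>.sqrt))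
          * (star hSpsd.1.eigenvectorUnitary : Matrix (Fin d) (Fin d) ℂ) := by
            simp only [Matrix.mul_assoc]
      _ = _ := by rw [hVV, Matrix.mul_one]; simp only [Matrix.mul_assoc]
  have hdetR₀ : R₀.det ≠ 0 := by
    have h2 : R₀.det * R₀.det = S.det := by rw [← det_mul, hR₀S]
    intro h
    exact hSpos.det_pos.ne' (by rw [← h2, h, mul_zero])
  have hR₀herm : R₀ᴴ = R₀ := by
    rw [hR₀def, conjTranspose_mul, conjTranspose_mul, diagonal_conjTranspose,
      ← Matrix.star_eq_conjTranspose, ← Matrix.star_eq_conjTranspose, star_star,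
      Matrix.mul_assoc]
    congr 3
    funext i
    simp [Complex.conj_ofReal]
  have hRherm : (R₀⁻¹)ᴴ = R₀⁻¹ := by rw [conjTranspose_nonsing_inv, hR₀herm]
  have hKtsum : ∑ j, (Kt j)ᴴ * Kt j = 1 := by
    rw [hKt]
    simp only [hmat, ← hR₀def, conjTranspose_mul, hRherm]
    have hsplit : ∑ j, R₀⁻¹ * (K j)ᴴ * (K j * R₀⁻¹)
        = R₀⁻¹ * (∑ j, (K j)ᴴ * K j) * R₀⁻¹ := by
      rw [Finset.mul_sum, Finset.sum_mul]
      congr 1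
      funext j
      noncomm_ring
    rw [hsplit, hsum, ← hR₀S]
    calc R₀⁻¹ * (R₀ * R₀) * R₀⁻¹ = (R₀⁻¹ * R₀) * (R₀ * R₀⁻¹) := by noncomm_ring
      _ = 1 := by rw [nonsing_inv_mul R₀ hdetR₀.isUnit, mul_nonsing_inv R₀ hdetR₀.isUnit, one_mul]
  have htrace : ∀ ρ : Matrix (Fin d) (Fin d) ℂ,
      Matrix.trace (∑ j, Kt j * ρ * (Kt j)ᴴ) = Matrix.trace ρ := by
    intro ρ
    rw [trace_sum]
    have hcyc : ∀ j, Matrix.trace (Kt j * ρ * (Kt j)ᴴ)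
        = Matrix.trace ((Kt j)ᴴ * Kt j * ρ) := by
      intro j
      rw [trace_mul_cycle]
    simp only [hcyc]
    rw [← trace_sum, ← Finset.sum_mul, hKtsum, one_mul]
  have hpos : ∀ ρ : Matrix (Fin d) (Fin d) ℂ, ρ.PosSemidef →
      (∑ j, Kt j * ρ * (Kt j)ᴴ).PosSemidef := by
    intro ρ hρ
    apply Finset.sum_induction _ Matrix.PosSemidef
      (fun a b ha hb => ha.add hb) Matrix.PosSemidef.zero
    intro j _
    exact hρ.mul_mul_conjTranspose_same (Kt j)
  exact ⟨hUnitA, hUmem, hsum, hSpos, hKtsum, htrace, hpos⟩
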